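/- Let P be a finite poset with n elements and ω : P → {1,...,n} a bijection. Define Ω_{P,ω}(k) as the number of maps x : P → {1,...,k} such that x_u ≤ x_v whenever u ⪯ v and ω(u) < ω(v), and x_u < x_v whenever u ⪯ v and ω(u) > ω(v). Then Ω_{P,ω}(k) agrees with a polynomial in k for all positive integers k. -/

import Mathlib

open Function

def OPValid {P : Type*} [Fintype P] [PartialOrder P] (ω : P ≃ Fin (Fintype.card P))
    {k : ℕ} (x : P → Fin k) : Prop :=
  ∀ u v : P, u ≤ v → (ω u < ω v → x u ≤ x v) ∧ (ω v < ω u → x u < x v)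

lemma opvalid_comp {P : Type*} [Fintype P] [PartialOrder P] (ω : P ≃ Fin (Fintype.card P))
    {j k : ℕ} (f : Fin j ↪o Fin k) (y : P → Fin j) :
    OPValid ω (fun p => f (y p)) ↔ OPValid ω y := by
  unfold OPValid
  simp [f.le_iff_le, f.lt_iff_lt]

noncomputable def keyEquiv {P : Type*} [Fintype P] [PartialOrder P]
    (ω : P ≃ Fin (Fintype.card P)) (k : ℕ) :
    (Σ j : Fin (Fintype.card P + 1),
      {y : P → Fin (j : ℕ) // OPValid ω y ∧ Surjective y} × (Fin (j : ℕ) ↪o Fin k))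
    ≃ {x : P → Fin k // OPValid ω x} := by
  classical
  apply Equiv.ofBijective
    (fun t => ⟨fun p => t.2.2 (t.2.1.1 p), (opvalid_comp ω t.2.2 t.2.1.1).2 t.2.1.2.1⟩)
  constructor
  · rintro ⟨j, ⟨y, hy, hsy⟩, f⟩ ⟨j', ⟨y', hy', hsy'⟩, f'⟩ h
    have h1 : ∀ p, f (y p) = f' (y' p) := fun p => congrFun (congrArg Subtype.val h) p
    have hr : Set.range ⇑f = Set.range ⇑f' := by
      rw [← hsy.range_comp ⇑f, ← hsy'.range_comp ⇑f']
      exact congrArg Set.range (funext h1)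
    have hj : j = j' := by
      have c1 : Nat.card (Set.range ⇑f) = (j : ℕ) := by
        rw [Nat.card_range_of_injective f.injective, Nat.card_eq_fintype_card, Fintype.card_fin]
      have c2 : Nat.card (Set.range ⇑f') = (j' : ℕ) := by
        rw [Nat.card_range_of_injective f'.injective, Nat.card_eq_fintype_card, Fintype.card_fin]
      exact Fin.ext (by rw [← c1, ← c2, hr])
    subst hj
    have hf : f = f' := by
      set s : Finset (Fin k) := (Set.range ⇑f).toFinset with hs
      have hcard : s.card = (j : ℕ) := by
        rw [hs, Set.toFinset_card, Set.card_range_of_injective f.injective, Fintype.card_fin]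
      rw [Finset.orderEmbOfFin_unique' hcard (f := f) (fun i => by simp [hs]),
        Finset.orderEmbOfFin_unique' hcard (f := f') (fun i => by simp [hs, hr])]
    subst hf
    have hyy : y = y' := funext fun p => f.injective (h1 p)
    subst hyy
    rfl
  · rintro ⟨x, hx⟩
    set s : Finset (Fin k) := Finset.image x Finset.univ with hs
    have hcard : s.card ≤ Fintype.card P := le_trans (Finset.card_image_le) (by simp)
    have hmem : ∀ p, x p ∈ s := fun p => by simp [hs]
    set f := s.orderEmbOfFin rfl with hf
    set y : P → Fin s.card := fun p => (s.orderIsoOfFin rfl).symm ⟨x p, hmem p⟩ with hy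
    have hfy : ∀ p, f (y p) = x p := fun p => by
      rw [hy, hf, ← Finset.coe_orderIsoOfFin_apply, OrderIso.apply_symm_apply]
    have hval : OPValid ω y := by
      refine (opvalid_comp ω f y).1 ?_
      have hc : (fun p => f (y p)) = x := funext hfy
      rw [hc]; exact hx
    have hsurj : Surjective y := by
      intro i
      have hi : f i ∈ s := Finset.orderEmbOfFin_mem s rfl i
      obtain ⟨p, -, hp⟩ := Finset.mem_image.1 hi
      refine ⟨p, ?_⟩
      have hxi : (⟨x p, hmem p⟩ : {a // a ∈ s}) = s.orderIsoOfFin rfl i := by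
        apply Subtype.ext
        show x p = _
        rw [Finset.coe_orderIsoOfFin_apply]
        exact hp
      simp [hy, hxi]
    exact ⟨⟨⟨s.card, Nat.lt_succ_of_le hcard⟩, ⟨y, hval, hsurj⟩, f⟩, Subtype.ext (funext hfy)⟩

instance embFinite {j k : ℕ} : Finite (Fin j ↪o Fin k) :=
  Finite.of_injective (fun f => (⇑f : Fin j → Fin k)) fun f g h => DFunLike.coe_injective h

noncomputable def embEquiv (j k : ℕ) :
    (Fin j ↪o Fin k) ≃ {s : Finset (Fin k) // s.card = j} where
  toFun f := ⟨(Set.range ⇑f).toFinset, by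
    rw [Set.toFinset_card, Set.card_range_of_injective f.injective, Fintype.card_fin]⟩
  invFun s := s.1.orderEmbOfFin s.2
  left_inv f := (Finset.orderEmbOfFin_unique' _ (fun i => by simp)).symm
  right_inv s := Subtype.ext (by simp)

lemma card_emb (j k : ℕ) : Nat.card (Fin j ↪o Fin k) = k.choose j := by
  rw [Nat.card_congr (embEquiv j k), Nat.card_eq_fintype_card, Fintype.card_finset_len,
    Fintype.card_fin]

lemma nat_card_sigma_fin {m : ℕ} (β : Fin m → Type*) [∀ j, Finite (β j)] :
    Nat.card (Σ j, β j) = ∑ j : Fin m, Nat.card (β j) := by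
  letI : ∀ j, Fintype (β j) := fun j => Fintype.ofFinite _
  simp [Nat.card_eq_fintype_card]


/-- A mixed graph on vertex set `V`: `E` are the undirected edges (a pair `{u,v}`
may be recorded as `E u v` or `E v u`), `A` are the arcs (directed edges). -/
structure MixedGraph (V : Type*) where
  E : V → V → Prop
  A : V → V → Prop

/-- A weak proper coloring: distinct colors along edges, weakly increasing along arcs. -/
def MixedGraph.IsWeakColoring {V : Type*} (G : MixedGraph V) {k : ℕ} (c : V → Fin k) : Prop :=
  (∀ u v, G.E u v → c u ≠ c v) ∧ (∀ u v, G.A u v → c u ≤ c v)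

/-- The weak chromatic counting function: the number of weak proper `k`-colorings. -/
noncomputable def MixedGraph.weakChi {V : Type*} (G : MixedGraph V) (k : ℕ) : ℕ :=
  Nat.card {c : V → Fin k // G.IsWeakColoring c}

/-- `O` is an orientation of the mixed graph `G`: it contains all arcs, orients every
undirected edge in exactly one of the two directions, and contains nothing else. -/
def MixedGraph.IsOrientation {V : Type*} (G : MixedGraph V) (O : V → V → Prop) : Prop :=
  (∀ u v, G.A u v → O u v) ∧
  (∀ u v, G.E u v → (O u v ↔ ¬ O v u)) ∧
  (∀ u v, O u v → G.A u v ∨ G.E u v ∨ G.E v u)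

/-- A relation is acyclic if it admits no directed cycle. -/
def IsAcyclicRel {V : Type*} (O : V → V → Prop) : Prop :=
  ∀ v, ¬ Relation.TransGen O v v

/-- A mixed graph is acyclic if all of its orientations are acyclic. -/
def MixedGraph.Acyclic {V : Type*} (G : MixedGraph V) : Prop :=
  ∀ O : V → V → Prop, G.IsOrientation O → IsAcyclicRel O

/-- A coloring `c` is intercompatible with an orientation `O` of `G` if for every `u → v`
in `O` we have `c u ≤ c v` when `uv` is an undirected edge of `G`, and `c u < c v`
when `u → v` is an arc of `G`. -/
def MixedGraph.Intercompatible {V : Type*} (G : MixedGraph V) (O : V → V → Prop)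
    {k : ℕ} (c : V → Fin k) : Prop :=
  ∀ u v, O u v → ((G.E u v ∨ G.E v u) → c u ≤ c v) ∧ (G.A u v → c u < c v)

/-- The order polynomial: for a finite poset `P` with a bijective labeling `ω`,
the number of maps `x : P → {1,…,k}` with `x u ≤ x v` whenever `u ⪯ v` and `ω u < ω v`,
and `x u < x v` whenever `u ⪯ v` and `ω u > ω v`, agrees with a polynomial in `k`. -/
theorem stmt9 {P : Type*} [Fintype P] [PartialOrder P]
    (ω : P ≃ Fin (Fintype.card P)) :
    ∃ p : Polynomial ℚ, ∀ k : ℕ, 0 < k →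
      p.eval (k : ℚ) =
        Nat.card {x : P → Fin k // ∀ u v : P, u ≤ v →
          (ω u < ω v → x u ≤ x v) ∧ (ω v < ω u → x u < x v)} := by
  
  suffices h : ∃ p : Polynomial ℚ, ∀ k : ℕ, 0 < k →
      p.eval (k : ℚ) = Nat.card {x : P → Fin k // OPValid ω x} from h
  classical
  set A : ℕ → ℕ := fun j => Nat.card {y : P → Fin j // OPValid ω y ∧ Function.Surjective y}
    with hA
  refine ⟨∑ j : Fin (Fintype.card P + 1), Polynomial.C ((A j : ℚ) / (j : ℕ).factorial)
    * descPochhammer ℚ (j : ℕ), ?_⟩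
  intro k hk
  have hcount : Nat.card {x : P → Fin k // OPValid ω x}
      = ∑ j : Fin (Fintype.card P + 1), A (j : ℕ) * k.choose (j : ℕ) := by
    rw [← Nat.card_congr (keyEquiv ω k), nat_card_sigma_fin]
    refine Finset.sum_congr rfl fun j _ => ?_
    rw [Nat.card_prod, card_emb]
  have heval : Polynomial.eval (k : ℚ) (∑ j : Fin (Fintype.card P + 1),
        Polynomial.C ((A j : ℚ) / (j : ℕ).factorial) * descPochhammer ℚ (j : ℕ))
      = ∑ j : Fin (Fintype.card P + 1), (A (j : ℕ) : ℚ) * k.choose (j : ℕ) := by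
    rw [Polynomial.eval_finset_sum]
    refine Finset.sum_congr rfl fun j _ => ?_
    rw [Polynomial.eval_mul, Polynomial.eval_C, descPochhammer_eval_eq_descFactorial,
      Nat.descFactorial_eq_factorial_mul_choose]
    have hfac : ((j : ℕ).factorial : ℚ) ≠ 0 := Nat.cast_ne_zero.2 (Nat.factorial_ne_zero _)
    push_cast
    field_simp
  rw [hcount, heval]
  push_cast
  rfl
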